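/- arXiv:1505.06073 — 4 statements merged into one kernel-verified Lean document; each statement's English description precedes it below -/
import Mathlib

section
/- For all c > 0, β > 0, every p ≥ 1 and every p-tuple v₁, …, v_p of points of ℂ, the determinant of the p × p matrix (K_{c,β}(v_i, v_j))_{1 ≤ i,j ≤ p} is a real number satisfying 0 ≤ det(K_{c,β}(v_i, v_j)) ≤ (c/π)^p. -/
open Complex Matrix
open scoped ComplexOrder

/-- The β-Ginibre kernel: `K_{c,β}(x,y) = (c/π)·exp(−(c/(2β))·(|x|²+|y|²))·exp((c/β)·x·conj(y))`. -/
noncomputable def ginibreKernel (c β : ℝ) (x y : ℂ) : ℂ :=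
  ((c / Real.pi : ℝ) : ℂ) *
    Complex.exp (((-(c / (2 * β)) * (‖x‖ ^ 2 + ‖y‖ ^ 2) : ℝ)) : ℂ) *
    Complex.exp (((c / β : ℝ) : ℂ) * x * (starRingEnd ℂ y))

private lemma myHasSum_finset_sum {ι : Type*} {s : Finset ι} {f : ι → ℕ → ℂ} {a : ι → ℂ}
    (h : ∀ i ∈ s, HasSum (f i) (a i)) :
    HasSum (fun n => ∑ i ∈ s, f i n) (∑ i ∈ s, a i) := by
  classical
  induction s using Finset.induction with
  | empty => simpa using hasSum_zero
  | @insert b t hx ih =>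
    simp only [Finset.sum_insert hx]
    exact (h b (Finset.mem_insert_self b t)).add (ih fun i hi => h i (Finset.mem_insert_of_mem hi))

section Main
variable (c β : ℝ) (p : ℕ) (v : Fin p → ℂ)

/-- The normalized kernel matrix. -/
noncomputable def ginN : Matrix (Fin p) (Fin p) ℂ :=
  Matrix.of fun i j =>
    (Real.exp (-(c / (2 * β)) * ‖v i‖ ^ 2) : ℂ) *
    (Real.exp (-(c / (2 * β)) * ‖v j‖ ^ 2) : ℂ) *
    Complex.exp (((c / β : ℝ) : ℂ) * v i * (starRingEnd ℂ (v j)))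

lemma ginN_herm : (ginN c β p v).IsHermitian := by
  ext i j
  simp only [ginN, Matrix.conjTranspose_apply, Matrix.of_apply, star_mul', RCLike.star_def]
  rw [← Complex.exp_conj]
  simp only [_root_.map_mul, Complex.conj_conj, Complex.conj_ofReal]
  ring_nf

lemma ginN_diag (i : Fin p) : ginN c β p v i i = 1 := by
  simp only [ginN, Matrix.of_apply]
  rw [← Complex.ofReal_mul, ← Real.exp_add, mul_assoc ((c/β : ℝ):ℂ), Complex.mul_conj,
    ← Complex.ofReal_mul, Complex.ofReal_exp, ← Complex.exp_add, ← Complex.ofReal_add]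
  rw [show -(c / (2 * β)) * ‖v i‖ ^ 2 + -(c / (2 * β)) * ‖v i‖ ^ 2 +
      c / β * Complex.normSq (v i) = 0 by
    rw [Complex.normSq_eq_norm_sq]; field_simp; ring]
  simp

lemma ginN_psd (hc : 0 < c) (hβ : 0 < β) : (ginN c β p v).PosSemidef := by
  refine .of_dotProduct_mulVec_nonneg (ginN_herm c β p v) fun x => ?_
  set t : ℝ := c / β with ht
  set d : Fin p → ℝ := fun i => Real.exp (-(c / (2 * β)) * ‖v i‖ ^ 2) with hd
  set s : ℕ → ℂ := fun n => ∑ j, x j * (d j : ℂ) * (starRingEnd ℂ (v j)) ^ n with hs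
  -- each (i,j) term has sum
  have key : ∀ q : Fin p × Fin p,
      HasSum (fun n : ℕ => (starRingEnd ℂ (x q.1)) * x q.2 * (d q.1 : ℂ) * (d q.2 : ℂ) *
          (((t : ℂ) * v q.1 * starRingEnd ℂ (v q.2)) ^ n / n.factorial))
        ((starRingEnd ℂ (x q.1)) * x q.2 * (d q.1 : ℂ) * (d q.2 : ℂ) *
          Complex.exp ((t : ℂ) * v q.1 * starRingEnd ℂ (v q.2))) := by
    intro q
    have := NormedSpace.expSeries_div_hasSum_exp ((t : ℂ) * v q.1 * starRingEnd ℂ (v q.2))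
    rw [← Complex.exp_eq_exp_ℂ] at this
    exact this.mul_left _
  have hsum := myHasSum_finset_sum (s := (Finset.univ : Finset (Fin p × Fin p))) fun q _ => key q
  -- rewrite the limit as the quadratic form
  have hlim : (∑ q : Fin p × Fin p, (starRingEnd ℂ (x q.1)) * x q.2 * (d q.1 : ℂ) * (d q.2 : ℂ) *
          Complex.exp ((t : ℂ) * v q.1 * starRingEnd ℂ (v q.2)))
      = dotProduct (star x) ((ginN c β p v) *ᵥ x) := by
    rw [Fintype.sum_prod_type]
    simp only [dotProduct, Matrix.mulVec, Pi.star_apply, ginN, Matrix.of_apply,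
      Finset.mul_sum]
    refine Finset.sum_congr rfl fun i _ => Finset.sum_congr rfl fun j _ => ?_
    simp only [RCLike.star_def]
    ring
  -- rewrite the terms as nonneg reals
  have hterm : ∀ n : ℕ, (∑ q : Fin p × Fin p, (starRingEnd ℂ (x q.1)) * x q.2 * (d q.1 : ℂ) *
        (d q.2 : ℂ) * (((t : ℂ) * v q.1 * starRingEnd ℂ (v q.2)) ^ n / n.factorial))
      = ((t ^ n / n.factorial * Complex.normSq (s n) : ℝ) : ℂ) := by
    intro n
    rw [Fintype.sum_prod_type]
    have : ∀ i j : Fin p, (starRingEnd ℂ (x i)) * x j * (d i : ℂ) * (d j : ℂ) *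
        (((t : ℂ) * v i * starRingEnd ℂ (v j)) ^ n / n.factorial)
        = ((t : ℂ) ^ n / n.factorial) *
          ((starRingEnd ℂ (x i)) * (d i : ℂ) * (v i) ^ n) *
          (x j * (d j : ℂ) * (starRingEnd ℂ (v j)) ^ n) := by
      intro i j; rw [mul_pow, mul_pow]; ring
    simp_rw [this, ← Finset.mul_sum, ← Finset.sum_mul]
    have hconj : (∑ i, (starRingEnd ℂ (x i)) * (d i : ℂ) * (v i) ^ n) = starRingEnd ℂ (s n) := by
      rw [hs, map_sum]
      refine Finset.sum_congr rfl fun i _ => ?_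
      simp [Complex.conj_ofReal]
    rw [show (∑ i, (t:ℂ) ^ n / n.factorial *
        ((starRingEnd ℂ (x i)) * (d i : ℂ) * (v i) ^ n)) = ((t:ℂ) ^ n / n.factorial) *
        (∑ i, (starRingEnd ℂ (x i)) * (d i : ℂ) * (v i) ^ n) from (Finset.mul_sum _ _ _).symm,
      hconj, mul_assoc,
      show (∑ i, x i * (d i : ℂ) * (starRingEnd ℂ (v i)) ^ n) = s n from rfl]
    push_cast
    rw [Complex.normSq_eq_conj_mul_self]
  rw [hlim] at hsum
  set S := dotProduct (star x) ((ginN c β p v) *ᵥ x) with hS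
  have h1 : HasSum (fun n => ((t ^ n / n.factorial * Complex.normSq (s n) : ℝ) : ℂ)) S := by
    convert hsum using 1
    exact funext fun n => (hterm n).symm
  have hre : HasSum (fun n => t ^ n / n.factorial * Complex.normSq (s n)) S.re := by
    have := h1.mapL Complex.reCLM
    simpa only [Complex.reCLM_apply, Complex.ofReal_re, Function.comp] using this
  have him : HasSum (fun _ : ℕ => (0 : ℝ)) S.im := by
    have := h1.mapL Complex.imCLM
    simpa only [Complex.imCLM_apply, Complex.ofReal_im, Function.comp] using this
  have ht0 : 0 ≤ t := le_of_lt (div_pos hc hβ)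
  have hSre : 0 ≤ S.re := hre.nonneg fun n =>
    mul_nonneg (div_nonneg (pow_nonneg ht0 n) (Nat.cast_nonneg _)) (Complex.normSq_nonneg _)
  have hSim : S.im = 0 := (him.unique hasSum_zero)
  rw [Complex.le_def]
  simp [hSre, hSim]

lemma ginN_sum_eigen (hc : 0 < c) (hβ : 0 < β) :
    ∑ i, (ginN_herm c β p v).eigenvalues i = p := by
  set hH := ginN_herm c β p v
  have h1 : (ginN c β p v).trace = (p : ℂ) := by
    simp [Matrix.trace, Matrix.diag, ginN_diag]
  have h2 : (ginN c β p v).trace = ((∑ i, hH.eigenvalues i : ℝ) : ℂ) := by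
    conv_lhs => rw [hH.spectral_theorem]
    rw [Unitary.conjStarAlgAut_apply, Matrix.trace_mul_cycle, Matrix.mem_unitaryGroup_iff'.mp hH.eigenvectorUnitary.2, one_mul,
      Matrix.trace_diagonal]
    push_cast
    rfl
  rw [h1] at h2
  exact_mod_cast h2.symm

end Main

/-- The determinant of the matrix of β-Ginibre kernel values (the `p`-th joint
correlation function) is a real number in `[0, (c/π)^p]`. -/
theorem ginibre_kernel_det_bounds (c β : ℝ) (hc : 0 < c) (hβ : 0 < β)
    (p : ℕ) (hp : 1 ≤ p) (v : Fin p → ℂ) :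
    ((Matrix.of fun i j => ginibreKernel c β (v i) (v j)).det).im = 0 ∧
    0 ≤ ((Matrix.of fun i j => ginibreKernel c β (v i) (v j)).det).re ∧
    ((Matrix.of fun i j => ginibreKernel c β (v i) (v j)).det).re ≤ (c / Real.pi) ^ p := by
  have ha : 0 < c / Real.pi := div_pos hc Real.pi_pos
  have hM : (Matrix.of fun i j => ginibreKernel c β (v i) (v j))
      = ((c / Real.pi : ℝ) : ℂ) • ginN c β p v := by
    ext i j
    simp only [Matrix.of_apply, Matrix.smul_apply, ginibreKernel, ginN, smul_eq_mul]
    rw [show (-(c / (2 * β)) * (‖v i‖ ^ 2 + ‖v j‖ ^ 2) : ℝ)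
        = (-(c / (2 * β)) * ‖v i‖ ^ 2) + (-(c / (2 * β)) * ‖v j‖ ^ 2) by
          ring,
      Complex.ofReal_add, Complex.exp_add, ← Complex.ofReal_exp, ← Complex.ofReal_exp]
    ring
  have hN := ginN_psd c β p v hc hβ
  have hH := ginN_herm c β p v
  have hnn : ∀ i, 0 ≤ hH.eigenvalues i := fun i => hN.eigenvalues_nonneg i
  have hp0 : (0 : ℝ) < p := by exact_mod_cast Nat.lt_of_lt_of_le Nat.zero_lt_one hp
  have htrace := ginN_sum_eigen c β p v hc hβ
  have hdet : (ginN c β p v).det = ((∏ i, hH.eigenvalues i : ℝ) : ℂ) := by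
    rw [hH.det_eq_prod_eigenvalues]
    push_cast
    rfl
  have hprod0 : 0 ≤ ∏ i, hH.eigenvalues i := Finset.prod_nonneg fun i _ => hnn i
  have hprod_le : (∏ i, hH.eigenvalues i) ≤ 1 := by
    have hw : ∑ _i : Fin p, (1 / p : ℝ) = 1 := by
      rw [Finset.sum_const, Finset.card_univ, Fintype.card_fin, nsmul_eq_mul]
      field_simp
    have hgm := Real.geom_mean_le_arith_mean_weighted Finset.univ (fun _ => (1 : ℝ) / p)
      hH.eigenvalues (fun i _ => by positivity) hw (fun i _ => hnn i)
    have hrhs : ∑ i : Fin p, (1 / p : ℝ) * hH.eigenvalues i = 1 := by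
      rw [← Finset.mul_sum, htrace]
      field_simp
    rw [hrhs] at hgm
    have hpos : 0 ≤ ∏ i, hH.eigenvalues i ^ ((1 : ℝ) / p) :=
      Finset.prod_nonneg fun i _ => Real.rpow_nonneg (hnn i) _
    have hpow : (∏ i, hH.eigenvalues i ^ ((1 : ℝ) / p)) ^ p ≤ 1 := pow_le_one₀ hpos hgm
    calc (∏ i, hH.eigenvalues i)
        = (∏ i, hH.eigenvalues i ^ ((1 : ℝ) / p)) ^ p := by
          rw [← Finset.prod_pow]
          refine Finset.prod_congr rfl fun i _ => ?_
          rw [← Real.rpow_natCast (hH.eigenvalues i ^ ((1 : ℝ) / p)) p,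
            ← Real.rpow_mul (hnn i), one_div, inv_mul_cancel₀ (ne_of_gt hp0), Real.rpow_one]
      _ ≤ 1 := hpow
  rw [hM, Matrix.det_smul, hdet, Fintype.card_fin, ← Complex.ofReal_pow,
    ← Complex.ofReal_mul]
  refine ⟨Complex.ofReal_im _, ?_, ?_⟩
  · rw [Complex.ofReal_re]
    exact mul_nonneg (pow_nonneg ha.le p) hprod0
  · rw [Complex.ofReal_re]
    calc (c / Real.pi) ^ p * ∏ i, hH.eigenvalues i
        ≤ (c / Real.pi) ^ p * 1 := by
          exact mul_le_mul_of_nonneg_left hprod_le (pow_nonneg ha.le p)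
      _ = (c / Real.pi) ^ p := mul_one _
end

section
/- Fix c > 0 and r > 0. Then the map β ↦ (1 − β + β·exp(−(c/β)·r²))^{−1} is monotone nondecreasing on (0,1]; that is, the repulsion of the β-Ginibre point process, as measured by its J-function, increases with β. -/
/-- The J-function of the β-Ginibre point process of intensity `c/π`:
`J(r) = (1 − β + β·exp(−(c/β)·r²))⁻¹`. -/
noncomputable def ginibreJ (c β r : ℝ) : ℝ :=
  (1 - β + β * Real.exp (-(c / β) * r ^ 2))⁻¹

lemma ginibre_aux_hasDerivAt (a : ℝ) {β : ℝ} (hβ : 0 < β) :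
    HasDerivAt (fun β : ℝ => 1 - β + β * Real.exp (-(a / β)))
      (-1 + Real.exp (-(a / β)) * (1 + a / β)) β := by
  have h1 : HasDerivAt (fun β : ℝ => -(a / β)) (a / β ^ 2) β := by
    simp only [div_eq_mul_inv]
    have h : HasDerivAt (fun y => -(a * y⁻¹)) (-(a * -(β ^ 2)⁻¹)) β := ((hasDerivAt_inv hβ.ne').const_mul a).neg
    convert h using 1
    ring
  have h2 : HasDerivAt (fun β : ℝ => Real.exp (-(a / β)))
      (Real.exp (-(a / β)) * (a / β ^ 2)) β := (Real.hasDerivAt_exp _).comp β h1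
  have h3 : HasDerivAt (fun β : ℝ => β * Real.exp (-(a / β)))
      (1 * Real.exp (-(a / β)) + β * (Real.exp (-(a / β)) * (a / β ^ 2))) β :=
    (hasDerivAt_id β).mul h2
  have h4 : HasDerivAt (fun β : ℝ => 1 - β + β * Real.exp (-(a / β)))
      (-1 + (1 * Real.exp (-(a / β)) + β * (Real.exp (-(a / β)) * (a / β ^ 2)))) β := by
    have h5 : HasDerivAt (fun β : ℝ => 1 - β) (-1 : ℝ) β := by
      simpa using (hasDerivAt_id β).const_sub 1
    exact h5.add h3
  convert h4 using 1
  field_simp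

lemma ginibre_aux_anti (a : ℝ) (ha : 0 < a) :
    AntitoneOn (fun β : ℝ => 1 - β + β * Real.exp (-(a / β))) (Set.Ioi 0) := by
  apply antitoneOn_of_deriv_nonpos (convex_Ioi 0)
  · apply ContinuousOn.add (continuousOn_const.sub continuousOn_id)
    apply ContinuousOn.mul continuousOn_id
    apply Real.continuous_exp.comp_continuousOn
    exact (continuousOn_const.div continuousOn_id fun x hx => ne_of_gt hx).neg
  · intro x hx
    rw [interior_Ioi] at hx
    exact (ginibre_aux_hasDerivAt a hx).differentiableAt.differentiableWithinAt
  · intro x hx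
    rw [interior_Ioi] at hx
    have hx' : 0 < x := hx
    rw [(ginibre_aux_hasDerivAt a hx).deriv]
    have key : Real.exp (-(a / x)) * (1 + a / x) ≤ 1 := by
      have h1 : 1 + a / x ≤ Real.exp (a / x) := by linarith [Real.add_one_le_exp (a / x)]
      have h2 : (0 : ℝ) < 1 + a / x := by positivity
      calc Real.exp (-(a / x)) * (1 + a / x)
          ≤ Real.exp (-(a / x)) * Real.exp (a / x) := by
            apply mul_le_mul_of_nonneg_left _ (Real.exp_pos _).le
            linarith
        _ = 1 := by rw [← Real.exp_add]; simp
    linarith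

/-- For fixed `c > 0` and `r > 0`, the repulsion measured by the J-function
increases with `β` on `(0,1]`. -/
theorem ginibreJ_monotone_in_beta (c r : ℝ) (hc : 0 < c) (hr : 0 < r) :
    MonotoneOn (fun β : ℝ => ginibreJ c β r) (Set.Ioc (0 : ℝ) 1) := by
  have ha : 0 < c * r ^ 2 := by positivity
  intro x hx y hy hxy
  have hx0 := hx.1
  have hy0 := hy.1
  have hrw : ∀ β : ℝ, -(c / β) * r ^ 2 = -(c * r ^ 2 / β) := by
    intro β; ring
  have hanti := ginibre_aux_anti (c * r ^ 2) ha hx.1 hy.1 hxy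
  simp only at hanti
  have hposy : 0 < 1 - y + y * Real.exp (-(c / y) * r ^ 2) := by
    have h1 : 0 ≤ 1 - y := by linarith [hy.2]
    have h2 : 0 < y * Real.exp (-(c / y) * r ^ 2) := by positivity
    linarith
  simp only [ginibreJ]
  apply inv_anti₀ hposy
  rw [hrw x, hrw y]
  exact hanti
end

section
/- Let M > 0, E ≥ 0, c ≥ 0 and t ≥ 0. Let (c_i)_{i ≥ 1} be a sequence of real numbers with 0 < c_i ≤ M for all i and such that (1/n)·Σ_{i=1}^n c_i converges to c as n → ∞. Let (ε_{n,i}) be real numbers with |ε_{n,i}| ≤ E for all n and 1 ≤ i ≤ n. Then the products Π_{i=1}^n (1 − c_i·t/n + ε_{n,i}/n²) converge to e^{−c·t} as n → ∞. -/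
open Filter

private lemma log_one_sub_bound {x : ℝ} (h : |x| ≤ 1/2) :
    |Real.log (1 - x) + x| ≤ 2 * x ^ 2 := by
  have h1 : |x| < 1 := lt_of_le_of_lt h (by norm_num)
  have := Real.abs_log_sub_add_sum_range_le h1 1
  simp only [Finset.sum_range_one, pow_one, Nat.cast_zero, zero_add, div_one] at this
  have h2 : |x| ^ 2 / (1 - |x|) ≤ 2 * x ^ 2 := by
    have hx2 : |x| ^ 2 = x ^ 2 := sq_abs x
    have hhalf : (1:ℝ)/2 ≤ 1 - |x| := by linarith
    calc |x| ^ 2 / (1 - |x|) ≤ |x| ^ 2 / (1/2) := by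
          apply div_le_div_of_nonneg_left (by positivity) (by norm_num) hhalf
      _ = 2 * x ^ 2 := by rw [hx2]; ring
  calc |Real.log (1 - x) + x| = |x + Real.log (1 - x)| := by rw [add_comm]
    _ ≤ |x| ^ (1 + 1) / (1 - |x|) := this
    _ ≤ 2 * x ^ 2 := h2

/-- Void probabilities of superposed β-Ginibre processes converge to the Poisson void
probability: if `0 < c_i ≤ M`, `(1/n)Σ_{i<n} c_i → c`, and `|ε_{n,i}| ≤ E`, then
`Π_{i<n} (1 − c_i t/n + ε_{n,i}/n²) → e^{−ct}`. -/
theorem void_probability_product_tendsto (M E c t : ℝ)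
    (hM : 0 < M) (hE : 0 ≤ E) (hc : 0 ≤ c) (ht : 0 ≤ t)
    (ci : ℕ → ℝ) (hci : ∀ i, 0 < ci i ∧ ci i ≤ M)
    (havg : Tendsto (fun n : ℕ => (∑ i ∈ Finset.range n, ci i) / n) atTop (nhds c))
    (ε : ℕ → ℕ → ℝ) (hε : ∀ n i, i < n → |ε n i| ≤ E) :
    Tendsto
      (fun n : ℕ => ∏ i ∈ Finset.range n, (1 - ci i * t / n + ε n i / (n : ℝ) ^ 2))
      atTop (nhds (Real.exp (-(c * t)))) := by
  set a : ℕ → ℕ → ℝ := fun n i => ci i * t / n - ε n i / (n : ℝ) ^ 2 with ha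
  set b : ℕ → ℝ := fun n => M * t / n + E / (n : ℝ) ^ 2 with hb
  have hnat : Tendsto (fun n : ℕ => (n : ℝ)) atTop atTop := tendsto_natCast_atTop_atTop
  have hn2 : Tendsto (fun n : ℕ => ((n : ℝ)) ^ 2) atTop atTop :=
    (tendsto_pow_atTop two_ne_zero).comp hnat
  have hb0 : Tendsto b atTop (nhds 0) := by
    have h1 : Tendsto (fun n : ℕ => M * t / (n : ℝ)) atTop (nhds 0) :=
      tendsto_const_nhds.div_atTop hnat
    have h2 : Tendsto (fun n : ℕ => E / ((n : ℝ)) ^ 2) atTop (nhds 0) :=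
      tendsto_const_nhds.div_atTop hn2
    simpa using h1.add h2
  -- |a n i| ≤ b n for 1 ≤ n, i < n
  have habs : ∀ n : ℕ, 1 ≤ n → ∀ i < n, |a n i| ≤ b n := by
    intro n hn i hi
    have hnpos : (0 : ℝ) < n := by exact_mod_cast hn
    have h1 : |ci i * t / n| ≤ M * t / n := by
      rw [abs_div, abs_of_nonneg hnpos.le, abs_of_nonneg (mul_nonneg (hci i).1.le ht)]
      gcongr
      exact (hci i).2
    have h2 : |ε n i / (n : ℝ) ^ 2| ≤ E / (n : ℝ) ^ 2 := by
      rw [abs_div, abs_of_nonneg (by positivity : (0:ℝ) ≤ (n:ℝ)^2)]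
      gcongr
      exact hε n i hi
    calc |a n i| ≤ |ci i * t / n| + |ε n i / (n : ℝ) ^ 2| := abs_sub _ _
      _ ≤ M * t / n + E / (n : ℝ) ^ 2 := add_le_add h1 h2
  -- eventual smallness
  have hev : ∀ᶠ n : ℕ in atTop, 1 ≤ n ∧ b n ≤ 1/2 :=
    (eventually_ge_atTop 1).and (hb0.eventually_le_const (by norm_num : (0:ℝ) < 1/2))
  -- S n = ∑ a n i tends to c*t
  have hSerr : Tendsto (fun n : ℕ => ∑ i ∈ Finset.range n, ε n i / (n : ℝ) ^ 2)
      atTop (nhds 0) := by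
    refine squeeze_zero_norm (a := fun n : ℕ => E / (n:ℝ)) ?_
      ((tendsto_const_nhds : Tendsto (fun _ : ℕ => E) atTop (nhds E)).div_atTop hnat)
    intro n
    rcases Nat.eq_zero_or_pos n with rfl | hn
    · simp
    have hnpos : (0 : ℝ) < n := by exact_mod_cast hn
    calc ‖∑ i ∈ Finset.range n, ε n i / (n : ℝ) ^ 2‖
        ≤ ∑ i ∈ Finset.range n, ‖ε n i / (n : ℝ) ^ 2‖ := norm_sum_le _ _
      _ ≤ ∑ _i ∈ Finset.range n, E / (n : ℝ) ^ 2 := by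
          apply Finset.sum_le_sum
          intro i hi
          rw [Real.norm_eq_abs, abs_div, abs_of_nonneg (by positivity : (0:ℝ) ≤ (n:ℝ)^2)]
          gcongr
          exact hε n i (Finset.mem_range.mp hi)
      _ = n * (E / (n : ℝ) ^ 2) := by rw [Finset.sum_const, Finset.card_range]; ring
      _ = E / n := by field_simp
  have hS : Tendsto (fun n : ℕ => ∑ i ∈ Finset.range n, a n i) atTop (nhds (c * t)) := by
    have heq : ∀ n : ℕ, ∑ i ∈ Finset.range n, a n i =
        (∑ i ∈ Finset.range n, ci i) / n * t - ∑ i ∈ Finset.range n, ε n i / (n : ℝ) ^ 2 := by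
      intro n
      rw [ha]
      rw [Finset.sum_sub_distrib]
      congr 1
      rw [div_mul_eq_mul_div, Finset.sum_mul, Finset.sum_div]
    simp only [heq]
    simpa using (havg.mul_const t).sub hSerr
  -- error of log approximation
  have hnb : Tendsto (fun n : ℕ => (n : ℝ) * b n) atTop (nhds (M * t)) := by
    have : Tendsto (fun n : ℕ => M * t + E / (n : ℝ)) atTop (nhds (M * t)) := by
      simpa using tendsto_const_nhds.add ((tendsto_const_nhds : Tendsto (fun _ : ℕ => E) atTop (nhds E)).div_atTop hnat)
    apply this.congr'
    filter_upwards [eventually_ge_atTop 1] with n hn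
    have hnpos : (0 : ℝ) < n := by exact_mod_cast hn
    rw [hb]
    field_simp
  have hg2 : Tendsto (fun n : ℕ => 2 * ((n : ℝ) * b n * b n)) atTop (nhds 0) := by
    simpa using tendsto_const_nhds.mul (hnb.mul hb0) (f := fun _ : ℕ => (2:ℝ))
  have hr : Tendsto (fun n : ℕ => ∑ i ∈ Finset.range n, (Real.log (1 - a n i) + a n i))
      atTop (nhds 0) := by
    apply squeeze_zero_norm' _ hg2
    filter_upwards [hev] with n ⟨hn1, hn2'⟩
    calc ‖∑ i ∈ Finset.range n, (Real.log (1 - a n i) + a n i)‖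
        ≤ ∑ i ∈ Finset.range n, ‖Real.log (1 - a n i) + a n i‖ := norm_sum_le _ _
      _ ≤ ∑ _i ∈ Finset.range n, 2 * (b n) ^ 2 := by
          apply Finset.sum_le_sum
          intro i hi
          have hai := habs n hn1 i (Finset.mem_range.mp hi)
          have h12 : |a n i| ≤ 1/2 := hai.trans hn2'
          calc ‖Real.log (1 - a n i) + a n i‖ ≤ 2 * (a n i) ^ 2 := log_one_sub_bound h12
            _ ≤ 2 * (b n) ^ 2 := by
                have := sq_le_sq' (neg_le_of_abs_le hai) (le_of_abs_le hai)
                linarith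
      _ = n * (2 * (b n) ^ 2) := by rw [Finset.sum_const, Finset.card_range]; ring
      _ = 2 * ((n : ℝ) * b n * b n) := by ring
  -- log product tends to -(c*t)
  have hL : Tendsto (fun n : ℕ => ∑ i ∈ Finset.range n, Real.log (1 - a n i))
      atTop (nhds (-(c * t))) := by
    have : Tendsto (fun n : ℕ =>
        (∑ i ∈ Finset.range n, (Real.log (1 - a n i) + a n i)) -
        ∑ i ∈ Finset.range n, a n i) atTop (nhds (0 - c * t)) := hr.sub hS
    simpa [Finset.sum_add_distrib] using this
  -- conclude
  have hfinal := (Real.continuous_exp.tendsto _).comp hL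
  apply hfinal.congr'
  filter_upwards [hev] with n ⟨hn1, hn2'⟩
  have hpos : ∀ i ∈ Finset.range n, (0 : ℝ) < 1 - a n i := by
    intro i hi
    have hai := (habs n hn1 i (Finset.mem_range.mp hi)).trans hn2'
    exact sub_pos.mpr (lt_of_le_of_lt (le_of_abs_le hai) (by norm_num))
  calc Real.exp (∑ i ∈ Finset.range n, Real.log (1 - a n i))
      = ∏ i ∈ Finset.range n, Real.exp (Real.log (1 - a n i)) := Real.exp_sum _ _
    _ = ∏ i ∈ Finset.range n, (1 - a n i) :=
        Finset.prod_congr rfl fun i hi => Real.exp_log (hpos i hi)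
    _ = ∏ i ∈ Finset.range n, (1 - ci i * t / n + ε n i / (n : ℝ) ^ 2) :=
        Finset.prod_congr rfl fun i _ => by rw [ha]; ring
end

section
/- Let M > 0, c ≥ 0 and t ≥ 0. Let (c_i)_{i ≥ 1} be a sequence of real numbers with 0 < c_i ≤ M for all i and such that (1/n)·Σ_{i=1}^n c_i converges to c as n → ∞. Then Σ_{i=1}^n (c_i·t/n)·Π_{j=1, j≠i}^n (1 − c_j·t/n) converges to c·t·e^{−c·t} as n → ∞. -/
open Filter

private lemma aux_log_le {x : ℝ} (h1 : x < 1) : Real.log (1 - x) ≤ -x := by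
  have := Real.log_le_sub_one_of_pos (by linarith : (0:ℝ) < 1 - x)
  linarith

private lemma aux_log_ge {x : ℝ} (h0 : 0 ≤ x) (h : x ≤ 1/2) :
    -x - 2*x^2 ≤ Real.log (1 - x) := by
  have hx1 : (0:ℝ) < 1 - x := by linarith
  have h2 : Real.log (1-x)⁻¹ ≤ (1-x)⁻¹ - 1 :=
    Real.log_le_sub_one_of_pos (by positivity)
  rw [Real.log_inv] at h2
  have h3 : (1-x)⁻¹ - 1 = x / (1-x) := by field_simp; ring
  rw [h3] at h2
  have h4 : x / (1-x) ≤ x + 2*x^2 := by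
    rw [div_le_iff₀ hx1]; nlinarith
  linarith

private lemma aux_div_ge {x : ℝ} (h0 : 0 ≤ x) (h : x ≤ 1/2) : x ≤ x/(1-x) := by
  have hx1 : (0:ℝ) < 1-x := by linarith
  rw [le_div_iff₀ hx1]; nlinarith

private lemma aux_div_le {x : ℝ} (h0 : 0 ≤ x) (h : x ≤ 1/2) :
    x/(1-x) ≤ x + 2*x^2 := by
  have hx1 : (0:ℝ) < 1-x := by linarith
  rw [div_le_iff₀ hx1]; nlinarith

/-- One-point probabilities of superposed β-Ginibre processes converge to the Poisson
one-point probability: if `0 < c_i ≤ M` and `(1/n)Σ_{i<n} c_i → c`, then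
`Σ_{i<n} (c_i t/n)·Π_{j<n, j≠i} (1 − c_j t/n) → c t e^{−ct}`. -/
theorem one_point_probability_sum_tendsto (M c t : ℝ)
    (hM : 0 < M) (hc : 0 ≤ c) (ht : 0 ≤ t)
    (ci : ℕ → ℝ) (hci : ∀ i, 0 < ci i ∧ ci i ≤ M)
    (havg : Tendsto (fun n : ℕ => (∑ i ∈ Finset.range n, ci i) / n) atTop (nhds c)) :
    Tendsto
      (fun n : ℕ => ∑ i ∈ Finset.range n,
        (ci i * t / n) * ∏ j ∈ (Finset.range n).erase i, (1 - ci j * t / n))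
      atTop (nhds (c * t * Real.exp (-(c * t)))) := by
  rcases ht.eq_or_lt with rfl | htpos
  · simpa using tendsto_const_nhds
  -- eventual bounds on x n i = ci i * t / n
  have hev : ∀ᶠ n : ℕ in atTop, ∀ i ∈ Finset.range n,
      0 < ci i * t / n ∧ ci i * t / n ≤ M * t / n ∧ ci i * t / n ≤ 1/2 := by
    filter_upwards [eventually_ge_atTop (⌈2*M*t⌉₊ + 1)] with n hn i _
    have hn1 : (1:ℕ) ≤ n := le_trans (Nat.le_add_left 1 _) hn
    have hnpos : (0:ℝ) < n := by exact_mod_cast hn1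
    have hnMt : 2*M*t ≤ n := by
      calc 2*M*t ≤ (⌈2*M*t⌉₊ : ℝ) := Nat.le_ceil _
        _ ≤ n := by exact_mod_cast le_trans (Nat.le_succ _) hn
    have hc1 := (hci i).1
    have hc2 := (hci i).2
    have hle : ci i * t / n ≤ M * t / n := by
      have h : ci i * t ≤ M * t := by nlinarith
      exact div_le_div_of_nonneg_right h hnpos.le
    have hhalf : M * t / n ≤ 1/2 := by
      rw [div_le_iff₀ hnpos]; nlinarith
    exact ⟨by positivity, hle, le_trans hle hhalf⟩
  -- the averaged sum A n = ∑ x n i = t * avg n tends to c * t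
  have hA : Tendsto (fun n : ℕ => ∑ i ∈ Finset.range n, ci i * t / n)
      atTop (nhds (c * t)) := by
    have heq : ∀ n : ℕ, ((∑ i ∈ Finset.range n, ci i) / n) * t
        = ∑ i ∈ Finset.range n, ci i * t / n := by
      intro n
      rw [div_mul_eq_mul_div, Finset.sum_mul, Finset.sum_div]
    exact (havg.mul_const t).congr heq
  -- error term 2 M² t² / n → 0
  have herr : Tendsto (fun n : ℕ => 2*M^2*t^2 / n) atTop (nhds 0) :=
    tendsto_const_div_atTop_nhds_zero_nat _
  -- sum of squares bound
  have hsq : ∀ᶠ n : ℕ in atTop,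
      ∑ i ∈ Finset.range n, 2*(ci i * t / n)^2 ≤ 2*M^2*t^2 / n := by
    filter_upwards [hev, eventually_ge_atTop 1] with n hn hn1
    have hnpos : (0:ℝ) < n := by exact_mod_cast hn1
    calc ∑ i ∈ Finset.range n, 2*(ci i * t / n)^2
        ≤ ∑ _i ∈ Finset.range n, 2*(M * t / n)^2 := by
          apply Finset.sum_le_sum
          intro i hi
          have h := hn i hi
          nlinarith [h.1, h.2.1]
      _ = n * (2*(M * t / n)^2) := by
          rw [Finset.sum_const, Finset.card_range]; ring
      _ = 2*M^2*t^2 / n * (n / n) := by field_simp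
      _ = 2*M^2*t^2 / n := by rw [div_self (ne_of_gt hnpos), mul_one]
  -- log of the full product tends to -(c*t)
  have hL : Tendsto (fun n : ℕ => ∑ j ∈ Finset.range n, Real.log (1 - ci j * t / n))
      atTop (nhds (-(c*t))) := by
    apply tendsto_of_tendsto_of_tendsto_of_le_of_le'
      (g := fun n : ℕ => -(∑ i ∈ Finset.range n, ci i * t / n) - 2*M^2*t^2/n)
      (h := fun n : ℕ => -(∑ i ∈ Finset.range n, ci i * t / n))
    · simpa using (hA.neg.sub herr)
    · simpa using hA.neg
    · filter_upwards [hev, hsq] with n hn hs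
      have h1 : ∀ i ∈ Finset.range n,
          -(ci i * t / n) - 2*(ci i * t / n)^2 ≤ Real.log (1 - ci i * t / n) := by
        intro i hi
        exact aux_log_ge (hn i hi).1.le (hn i hi).2.2
      calc -(∑ i ∈ Finset.range n, ci i * t / n) - 2*M^2*t^2/n
          ≤ -(∑ i ∈ Finset.range n, ci i * t / n)
              - ∑ i ∈ Finset.range n, 2*(ci i * t / n)^2 := by linarith
        _ = ∑ i ∈ Finset.range n, (-(ci i * t / n) - 2*(ci i * t / n)^2) := by
            rw [Finset.sum_sub_distrib, Finset.sum_neg_distrib]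
        _ ≤ _ := Finset.sum_le_sum h1
    · filter_upwards [hev] with n hn
      calc ∑ j ∈ Finset.range n, Real.log (1 - ci j * t / n)
          ≤ ∑ j ∈ Finset.range n, -(ci j * t / n) := by
            apply Finset.sum_le_sum
            intro i hi
            exact aux_log_le (by linarith [(hn i hi).2.2])
        _ = -(∑ i ∈ Finset.range n, ci i * t / n) := by
            rw [Finset.sum_neg_distrib]
  -- the full product tends to exp(-(c*t))
  have hP : Tendsto (fun n : ℕ => ∏ j ∈ Finset.range n, (1 - ci j * t / n))
      atTop (nhds (Real.exp (-(c*t)))) := by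
    have := (Real.continuous_exp.tendsto _).comp hL
    apply this.congr'
    filter_upwards [hev] with n hn
    simp only [Function.comp_apply]
    rw [Real.exp_sum]
    apply Finset.prod_congr rfl
    intro i hi
    exact Real.exp_log (by linarith [(hn i hi).2.2])
  -- the ratio sum tends to c*t
  have hS : Tendsto (fun n : ℕ => ∑ i ∈ Finset.range n,
      (ci i * t / n) / (1 - ci i * t / n)) atTop (nhds (c*t)) := by
    apply tendsto_of_tendsto_of_tendsto_of_le_of_le'
      (g := fun n : ℕ => ∑ i ∈ Finset.range n, ci i * t / n)
      (h := fun n : ℕ => (∑ i ∈ Finset.range n, ci i * t / n) + 2*M^2*t^2/n)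
    · exact hA
    · simpa using hA.add herr
    · filter_upwards [hev] with n hn
      apply Finset.sum_le_sum
      intro i hi
      exact aux_div_ge (hn i hi).1.le (hn i hi).2.2
    · filter_upwards [hev, hsq] with n hn hs
      calc ∑ i ∈ Finset.range n, (ci i * t / n) / (1 - ci i * t / n)
          ≤ ∑ i ∈ Finset.range n, ((ci i * t / n) + 2*(ci i * t / n)^2) := by
            apply Finset.sum_le_sum
            intro i hi
            exact aux_div_le (hn i hi).1.le (hn i hi).2.2
        _ = (∑ i ∈ Finset.range n, ci i * t / n)
            + ∑ i ∈ Finset.range n, 2*(ci i * t / n)^2 := Finset.sum_add_distrib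
        _ ≤ _ := by linarith
  -- combine
  have hmain := hP.mul hS
  have hval : c * t * Real.exp (-(c*t)) = Real.exp (-(c*t)) * (c*t) := by ring
  rw [hval]
  apply hmain.congr'
  filter_upwards [hev] with n hn
  rw [Finset.mul_sum]
  apply Finset.sum_congr rfl
  intro i hi
  have hne : 1 - ci i * t / n ≠ 0 := by
    have := (hn i hi).2.2; intro h; linarith [h]
  have hprod : (∏ j ∈ (Finset.range n).erase i, (1 - ci j * t / n)) * (1 - ci i * t / n)
      = ∏ j ∈ Finset.range n, (1 - ci j * t / n) :=
    Finset.prod_erase_mul _ _ hi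
  have h2 : (1 - ci i * t / ↑n) * (ci i * t / ↑n / (1 - ci i * t / ↑n))
      = ci i * t / ↑n := by
    rw [mul_comm]; exact div_mul_cancel₀ _ hne
  rw [← hprod, mul_assoc, h2, mul_comm]
end
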